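/- Every compact operator T on an infinite-dimensional complex Hilbert space H has a nontrivial closed invariant subspace, i.e., there exists a closed subspace M of H with M ≠ {0}, M ≠ H, and T(M) ⊆ M. -/

import Mathlib

lemma as_span_singleton
    (H : Type*) [NormedAddCommGroup H] [InnerProductSpace ℂ H] [CompleteSpace H]
    (hH : ¬ FiniteDimensional ℂ H) (v : H) (hv : v ≠ 0) :
    IsClosed ((Submodule.span ℂ {v} : Submodule ℂ H) : Set H) ∧
      Submodule.span ℂ {v} ≠ ⊥ ∧ Submodule.span ℂ {v} ≠ (⊤ : Submodule ℂ H) := by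
  refine ⟨(Submodule.span ℂ {v}).closed_of_finiteDimensional, ?_, ?_⟩
  · simpa [Submodule.span_singleton_eq_bot] using hv
  · intro h
    apply hH
    haveI : FiniteDimensional ℂ (Submodule.span ℂ {v} : Submodule ℂ H) := inferInstance
    rw [h] at this
    exact Submodule.topEquiv.finiteDimensional

lemma as_eigen
    (H : Type*) [NormedAddCommGroup H] [InnerProductSpace ℂ H] [CompleteSpace H]
    (hH : ¬ FiniteDimensional ℂ H)
    (T : H →L[ℂ] H) (c : ℂ) (v : H) (hv : v ≠ 0) (hTv : T v = c • v) :
    ∃ M : Submodule ℂ H, IsClosed (M : Set H) ∧ M ≠ ⊥ ∧ M ≠ ⊤ ∧ ∀ x ∈ M, T x ∈ M := by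
  set S : H →L[ℂ] H := T - c • ContinuousLinearMap.id ℂ H with hS
  have hSa : ∀ x : H, S x = T x - c • x := fun x => rfl
  have hker : ∀ x : H, x ∈ LinearMap.ker (S : H →ₗ[ℂ] H) ↔ T x = c • x := by
    intro x
    rw [LinearMap.mem_ker, ContinuousLinearMap.coe_coe]
    constructor
    · intro h; have := hSa x; rw [h] at this; exact (sub_eq_zero.mp this.symm)
    · intro h; rw [hSa, h, sub_self]
  by_cases hE : LinearMap.ker (S : H →ₗ[ℂ] H) = (⊤ : Submodule ℂ H)
  · refine ⟨Submodule.span ℂ {v}, (as_span_singleton H hH v hv).1,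
      (as_span_singleton H hH v hv).2.1, (as_span_singleton H hH v hv).2.2, ?_⟩
    intro x hx
    have hTx : T x = c • x := (hker x).mp (hE ▸ Submodule.mem_top)
    rw [hTx]
    exact Submodule.smul_mem _ _ hx
  · refine ⟨LinearMap.ker (S : H →ₗ[ℂ] H), ContinuousLinearMap.isClosed_ker S, ?_, hE, ?_⟩
    · intro h
      apply hv
      have : v ∈ LinearMap.ker (S : H →ₗ[ℂ] H) := (hker v).mpr hTv
      rw [h] at this
      simpa using this
    · intro x hx
      rw [hker] at hx ⊢
      rw [hx, map_smul, hx]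

lemma as_nontrivial
    (H : Type*) [NormedAddCommGroup H] [InnerProductSpace ℂ H]
    (hH : ¬ FiniteDimensional ℂ H) : Nontrivial H := by
  by_contra hns
  rw [not_nontrivial_iff_subsingleton] at hns
  exact hH inferInstance

lemma as_eigen_of_radius
    (H : Type*) [NormedAddCommGroup H] [InnerProductSpace ℂ H] [CompleteSpace H]
    (hH : ¬ FiniteDimensional ℂ H)
    (T : H →L[ℂ] H) (hT : IsCompactOperator T)
    (hr : spectralRadius ℂ T ≠ 0) : ∃ (c : ℂ) (v : H), v ≠ 0 ∧ T v = c • v := by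
  haveI : Nontrivial H := as_nontrivial H hH
  obtain ⟨lam, hlam_mem, hlam_eq⟩ := spectrum.exists_nnnorm_eq_spectralRadius (a := T)
  have hlam_ne : lam ≠ 0 := by
    rintro rfl
    apply hr
    rw [← hlam_eq]; simp
  have hlam_pos : 0 < ‖lam‖ := norm_pos_iff.mpr hlam_ne
  -- approximate eigenvectors
  have key : ∀ ε : ℝ, 0 < ε → ∃ y : H, ‖y‖ = 1 ∧ ‖T y - lam • y‖ ≤ ε := by
    intro ε hε
    set t : ℝ := 1 + ε / (3 * ‖lam‖) with ht
    have ht1 : 1 < t := by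
      have h0 : 0 < ε / (3 * ‖lam‖) := div_pos hε (by linarith)
      rw [ht]; linarith
    set μ : ℂ := (t : ℂ) * lam with hμ
    set d : ℝ := ‖μ - lam‖ with hd
    have hd_eq : d = (t - 1) * ‖lam‖ := by
      have : μ - lam = ((t - 1 : ℝ) : ℂ) * lam := by push_cast [hμ]; ring
      rw [hd, this, norm_mul, Complex.norm_real, Real.norm_eq_abs, abs_of_pos (by linarith)]
    have hd_pos : 0 < d := by rw [hd_eq]; exact mul_pos (by linarith) hlam_pos
    have hd_le : 3 * d ≤ ε := by
      rw [hd_eq, ht]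
      have h3 : ‖lam‖ ≠ 0 := ne_of_gt hlam_pos
      have : (3:ℝ) * ((1 + ε / (3 * ‖lam‖) - 1) * ‖lam‖) = ε := by
        field_simp
        ring
      linarith
    -- μ is in the resolvent set
    have hres : μ ∈ resolventSet ℂ T := by
      apply spectrum.mem_resolventSet_of_spectralRadius_lt
      rw [← hlam_eq]
      have : ‖lam‖₊ < ‖μ‖₊ := by
        rw [← NNReal.coe_lt_coe]
        simp only [coe_nnnorm]
        rw [hμ, norm_mul, Complex.norm_real]
        rw [Real.norm_eq_abs, abs_of_pos (by linarith : (0:ℝ) < t)]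
        nlinarith
      exact_mod_cast this
    obtain ⟨u, hu⟩ := hres
    -- resolvent norm lower bound
    have hubd : 1 / d ≤ ‖(↑u⁻¹ : H →L[ℂ] H)‖ := by
      by_contra hlt
      push_neg at hlt
      have hsm : ‖(↑u⁻¹ : H →L[ℂ] H) * algebraMap ℂ (H →L[ℂ] H) (μ - lam)‖ < 1 := by
        calc ‖(↑u⁻¹ : H →L[ℂ] H) * algebraMap ℂ (H →L[ℂ] H) (μ - lam)‖
            ≤ ‖(↑u⁻¹ : H →L[ℂ] H)‖ * ‖algebraMap ℂ (H →L[ℂ] H) (μ - lam)‖ := norm_mul_le _ _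
          _ = ‖(↑u⁻¹ : H →L[ℂ] H)‖ * d := by rw [norm_algebraMap']
          _ < (1 / d) * d := by
              apply mul_lt_mul_of_pos_right hlt hd_pos
          _ = 1 := by field_simp
      have hunit : IsUnit (algebraMap ℂ (H →L[ℂ] H) lam - T) := by
        have hfact : algebraMap ℂ (H →L[ℂ] H) lam - T
            = (↑u : H →L[ℂ] H) * (1 - ↑u⁻¹ * algebraMap ℂ (H →L[ℂ] H) (μ - lam)) := by
          rw [mul_sub, mul_one, ← mul_assoc, u.mul_inv, one_mul, hu]
          rw [map_sub]
          abel
        rw [hfact]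
        exact u.isUnit.mul (Units.oneSub _ hsm).isUnit
      rw [spectrum.mem_iff] at hlam_mem
      exact hlam_mem hunit
    -- find an almost-eigenvector
    have hN : (0:ℝ) < 1 / d := by positivity
    have h2 : 1 / d / 2 < ‖(↑u⁻¹ : H →L[ℂ] H)‖ := by linarith
    obtain ⟨x, hx1, hx2⟩ := ContinuousLinearMap.exists_lt_apply_of_lt_opNorm _ h2
    set w : H := (↑u⁻¹ : H →L[ℂ] H) x with hw
    have hw_pos : 0 < ‖w‖ := lt_trans (by positivity) hx2
    have huw : μ • w - T w = x := by
      have h1 : (↑u : H →L[ℂ] H) w = x := by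
        rw [hw, ← ContinuousLinearMap.mul_apply, u.mul_inv, ContinuousLinearMap.one_apply]
      rw [hu] at h1
      rw [← h1]
      rw [ContinuousLinearMap.sub_apply]
      congr 1
    set y : H := ((‖w‖ : ℂ))⁻¹ • w with hy
    have hy_norm : ‖y‖ = 1 := by
      rw [hy, norm_smul, norm_inv, Complex.norm_real, Real.norm_eq_abs,
        abs_of_nonneg (norm_nonneg w), inv_mul_cancel₀ (ne_of_gt hw_pos)]
    refine ⟨y, hy_norm, ?_⟩
    have hsplit : T y - lam • y = (T y - μ • y) + (μ - lam) • y := by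
      rw [sub_smul]; abel
    have h1 : ‖T y - μ • y‖ ≤ 2 * d := by
      have : T y - μ • y = ((‖w‖ : ℂ))⁻¹ • (T w - μ • w) := by
        rw [hy, map_smul, smul_comm μ]
        rw [← smul_sub]
      rw [this, norm_smul, norm_inv, Complex.norm_real, Real.norm_eq_abs,
        abs_of_nonneg (norm_nonneg w)]
      have hTw : ‖T w - μ • w‖ = ‖x‖ := by
        rw [← norm_neg, neg_sub, huw]
      rw [hTw]
      have hwinv : ‖w‖⁻¹ ≤ 2 * d := by
        rw [inv_le_comm₀ hw_pos (by positivity)]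
        calc (2 * d)⁻¹ = 1 / d / 2 := by field_simp
          _ ≤ ‖w‖ := le_of_lt hx2
      calc ‖w‖⁻¹ * ‖x‖ ≤ ‖w‖⁻¹ * 1 := by
            apply mul_le_mul_of_nonneg_left (le_of_lt hx1) (by positivity)
        _ = ‖w‖⁻¹ := mul_one _
        _ ≤ 2 * d := hwinv
    have h2' : ‖(μ - lam) • y‖ = d := by
      rw [norm_smul, hy_norm, mul_one, ← hd]
    calc ‖T y - lam • y‖ ≤ ‖T y - μ • y‖ + ‖(μ - lam) • y‖ := hsplit ▸ norm_add_le _ _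
      _ ≤ 2 * d + d := by linarith [h2'.le]
      _ ≤ ε := by linarith
  -- extract eigenvector by compactness
  choose y hy1 hy2 using fun n : ℕ => key (1 / (n + 1)) (by positivity)
  have hmem : ∀ n, T (y n) ∈ closure (T '' Metric.closedBall 0 1) :=
    fun n => subset_closure ⟨y n, by simp [hy1 n], rfl⟩
  have hcomp : IsCompact (closure (T '' Metric.closedBall (0:H) 1)) :=
    hT.isCompact_closure_image_of_bounded Metric.isBounded_closedBall
  obtain ⟨z, _, φ, hφ, hz⟩ := hcomp.tendsto_subseq hmem
  have hdiff : Filter.Tendsto (fun n => T (y (φ n)) - lam • y (φ n)) Filter.atTop (nhds 0) := by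
    apply squeeze_zero_norm (fun n => hy2 (φ n))
    have h0 : Filter.Tendsto (fun n : ℕ => 1 / ((n:ℝ) + 1)) Filter.atTop (nhds 0) :=
      tendsto_one_div_add_atTop_nhds_zero_nat
    exact h0.comp (hφ.tendsto_atTop)
  have hly : Filter.Tendsto (fun n => lam • y (φ n)) Filter.atTop (nhds z) := by
    have : (fun n => lam • y (φ n)) = fun n => T (y (φ n)) - (T (y (φ n)) - lam • y (φ n)) := by
      ext n; abel
    rw [this]
    simpa using hz.sub hdiff
  have hyv : Filter.Tendsto (fun n => y (φ n)) Filter.atTop (nhds (lam⁻¹ • z)) := by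
    have := hly.const_smul lam⁻¹
    simpa [smul_smul, inv_mul_cancel₀ hlam_ne] using this
  refine ⟨lam, lam⁻¹ • z, ?_, ?_⟩
  · have hnorm : Filter.Tendsto (fun n => ‖y (φ n)‖) Filter.atTop (nhds ‖lam⁻¹ • z‖) :=
      hyv.norm
    have : ‖lam⁻¹ • z‖ = 1 := by
      have hconst : Filter.Tendsto (fun n : ℕ => ‖y (φ n)‖) Filter.atTop (nhds 1) := by
        simpa [hy1] using (tendsto_const_nhds : Filter.Tendsto (fun _ : ℕ => (1:ℝ)) Filter.atTop (nhds 1))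
      exact tendsto_nhds_unique hnorm hconst
    intro h0
    rw [h0] at this; simp at this
  · have hTv : Filter.Tendsto (fun n => T (y (φ n))) Filter.atTop (nhds (T (lam⁻¹ • z))) :=
      (T.continuous.tendsto _).comp hyv
    have hTz : T (lam⁻¹ • z) = z := tendsto_nhds_unique hTv hz
    rw [hTz, smul_smul, mul_inv_cancel₀ hlam_ne, one_smul]

open Polynomial in
lemma as_dense
    (H : Type*) [NormedAddCommGroup H] [InnerProductSpace ℂ H] [CompleteSpace H]
    (T : H →L[ℂ] H)
    (hno : ∀ M : Submodule ℂ H, IsClosed (M : Set H) → (∀ x ∈ M, T x ∈ M) → M = ⊥ ∨ M = ⊤)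
    (y : H) (hy : y ≠ 0) :
    Dense (Set.range fun p : Polynomial ℂ => (Polynomial.aeval T p) y) := by
  set My : Submodule ℂ H := Submodule.span ℂ (Set.range fun n : ℕ => (T ^ n) y) with hMy
  have hTMy : ∀ x ∈ My, T x ∈ My := by
    intro x hx
    induction hx using Submodule.span_induction with
    | mem z hz =>
      obtain ⟨n, rfl⟩ := hz
      apply Submodule.subset_span
      exact ⟨n + 1, by simp [pow_succ']⟩
    | zero => simpa using Submodule.zero_mem My
    | add a b _ _ ha hb => rw [map_add]; exact Submodule.add_mem My ha hb
    | smul c a _ ha => rw [map_smul]; exact Submodule.smul_mem My c ha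
  set M : Submodule ℂ H := My.topologicalClosure with hM
  have hMcl : IsClosed (M : Set H) := My.isClosed_topologicalClosure
  have hMinv : ∀ x ∈ M, T x ∈ M := by
    intro x hx
    have h1 : T x ∈ T '' closure (My : Set H) := ⟨x, hx, rfl⟩
    have h2 : T '' closure (My : Set H) ⊆ closure (T '' (My : Set H)) :=
      image_closure_subset_closure_image T.continuous
    have h3 : closure (T '' (My : Set H)) ⊆ closure (My : Set H) :=
      closure_mono (by rintro _ ⟨a, ha, rfl⟩; exact hTMy a ha)
    have : T x ∈ closure (My : Set H) := h3 (h2 h1)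
    rw [hM, ← SetLike.mem_coe, Submodule.topologicalClosure_coe]; exact this
  have hMne : M ≠ ⊥ := by
    intro h
    apply hy
    have : y ∈ M := My.le_topologicalClosure (Submodule.subset_span ⟨0, by simp⟩)
    rw [h] at this
    simpa using this
  have hMtop : M = ⊤ := (hno M hMcl hMinv).resolve_left hMne
  have hMyd : Dense (My : Set H) := by
    rw [dense_iff_closure_eq, ← Submodule.topologicalClosure_coe, ← hM, hMtop]
    simp
  apply hMyd.mono
  intro x hx
  induction hx using Submodule.span_induction with
  | mem z hz =>
    obtain ⟨n, rfl⟩ := hz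
    exact ⟨X ^ n, by simp⟩
  | zero => exact ⟨0, by simp⟩
  | add a b _ _ ha hb =>
    obtain ⟨p, hp⟩ := ha; obtain ⟨q, hq⟩ := hb
    exact ⟨p + q, by simp [hp, hq]⟩
  | smul c a _ ha =>
    obtain ⟨p, hp⟩ := ha
    exact ⟨c • p, by simp [hp]⟩

lemma as_gelfand
    (H : Type*) [NormedAddCommGroup H] [InnerProductSpace ℂ H] [CompleteSpace H]
    (T : H →L[ℂ] H) (hrad : spectralRadius ℂ T = 0) (c R : ℝ)
    (hc : 1 ≤ c) (hR : 0 ≤ R) :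
    ∃ m : ℕ, c ^ m * (‖(T ^ m : H →L[ℂ] H)‖ * R) < 2 := by
  have hg0 : Filter.Tendsto (fun n : ℕ => ‖(T ^ n : H →L[ℂ] H)‖ ^ (1 / (n:ℝ)))
      Filter.atTop (nhds 0) := by
    have h1 := spectrum.pow_norm_pow_one_div_tendsto_nhds_spectralRadius T
    rw [hrad] at h1
    have h2 := (ENNReal.tendsto_toReal (by simp)).comp h1
    have heq : (fun n : ℕ => (ENNReal.ofReal (‖(T ^ n : H →L[ℂ] H)‖ ^ (1 / (n:ℝ)))).toReal)
        = fun n : ℕ => ‖(T ^ n : H →L[ℂ] H)‖ ^ (1 / (n:ℝ)) := by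
      funext n
      exact ENNReal.toReal_ofReal (Real.rpow_nonneg (norm_nonneg _) _)
    rw [show (ENNReal.toReal ∘ fun n : ℕ => ENNReal.ofReal (‖(T ^ n : H →L[ℂ] H)‖ ^ (1 / (n:ℝ))))
        = fun n : ℕ => (ENNReal.ofReal (‖(T ^ n : H →L[ℂ] H)‖ ^ (1 / (n:ℝ)))).toReal from rfl,
      heq] at h2
    simpa using h2
  have hcpos : (0:ℝ) < c := lt_of_lt_of_le one_pos hc
  have hhalf : (0:ℝ) < 1 / (2 * c) := by positivity
  have ev1 : ∀ᶠ n : ℕ in Filter.atTop, ‖(T ^ n : H →L[ℂ] H)‖ ^ (1 / (n:ℝ)) < 1 / (2 * c) :=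
    hg0.eventually (gt_mem_nhds hhalf)
  have ev2 : ∀ᶠ n : ℕ in Filter.atTop, (1/2 : ℝ) ^ n * R < 2 := by
    have h3 : Filter.Tendsto (fun n : ℕ => (1/2 : ℝ) ^ n * R) Filter.atTop (nhds (0 * R)) :=
      (tendsto_pow_atTop_nhds_zero_of_lt_one (by norm_num) (by norm_num)).mul_const R
    rw [zero_mul] at h3
    exact h3.eventually (gt_mem_nhds two_pos)
  have ev3 : ∀ᶠ n : ℕ in Filter.atTop, 1 ≤ n := Filter.eventually_ge_atTop 1
  obtain ⟨m, h1, h2, h3⟩ := (ev1.and (ev2.and ev3)).exists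
  refine ⟨m, ?_⟩
  have hm0 : m ≠ 0 := by omega
  have hTn : ‖(T ^ m : H →L[ℂ] H)‖ ≤ (1 / (2 * c)) ^ m := by
    have h0 : (0:ℝ) ≤ ‖(T ^ m : H →L[ℂ] H)‖ := norm_nonneg _
    calc ‖(T ^ m : H →L[ℂ] H)‖ = (‖(T ^ m : H →L[ℂ] H)‖ ^ ((m:ℝ)⁻¹)) ^ m :=
          (Real.rpow_inv_natCast_pow h0 hm0).symm
      _ ≤ (1 / (2 * c)) ^ m := by
          apply pow_le_pow_left₀ (Real.rpow_nonneg h0 _)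
          rw [← one_div]
          exact le_of_lt h1
  calc c ^ m * (‖(T ^ m : H →L[ℂ] H)‖ * R)
      ≤ c ^ m * ((1 / (2 * c)) ^ m * R) := by
        apply mul_le_mul_of_nonneg_left (mul_le_mul_of_nonneg_right hTn hR) (by positivity)
    _ = (1/2 : ℝ) ^ m * R := by
        rw [← mul_assoc, ← mul_pow]
        have : c * (1 / (2 * c)) = 1/2 := by field_simp
        rw [this]
    _ < 2 := h2

theorem aronszajn_smith
    (H : Type*) [NormedAddCommGroup H] [InnerProductSpace ℂ H] [CompleteSpace H]
    (hH : ¬ FiniteDimensional ℂ H)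
    (T : H →L[ℂ] H) (hT : IsCompactOperator T) :
    ∃ M : Submodule ℂ H, IsClosed (M : Set H) ∧ M ≠ ⊥ ∧ M ≠ ⊤ ∧ ∀ x ∈ M, T x ∈ M := by
  haveI : Nontrivial H := as_nontrivial H hH
  by_cases hev : ∃ (c : ℂ) (v : H), v ≠ 0 ∧ T v = c • v
  · obtain ⟨c, v, hv, hTv⟩ := hev
    exact as_eigen H hH T c v hv hTv
  have hrad : spectralRadius ℂ T = 0 := by
    by_contra h
    exact hev (as_eigen_of_radius H hH T hT h)
  have hT0 : T ≠ 0 := by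
    rintro rfl
    obtain ⟨v, hv⟩ := exists_ne (0 : H)
    exact hev ⟨0, v, hv, by simp⟩
  have hTnorm : 0 < ‖T‖ := norm_pos_iff.mpr hT0
  by_contra hcon
  push_neg at hcon
  have hno : ∀ M : Submodule ℂ H, IsClosed (M : Set H) → (∀ x ∈ M, T x ∈ M) → M = ⊥ ∨ M = ⊤ := by
    intro M hcl hinv
    by_contra hM
    push_neg at hM
    obtain ⟨x, hx, hTx⟩ := hcon M hcl hM.1 hM.2
    exact hTx (hinv x hx)
  -- choose the center of the ball
  obtain ⟨u, hu1, hu2⟩ := T.exists_lt_apply_of_lt_opNorm (show ‖T‖ / 2 < ‖T‖ by linarith)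
  set x₀ : H := (6:ℂ) • u with hx₀
  have hx₀norm : 3 < ‖x₀‖ := by
    rw [hx₀, norm_smul]
    have h6 : ‖(6:ℂ)‖ = 6 := by norm_num
    rw [h6]
    have hu_lb : 1/2 < ‖u‖ := by
      by_contra hle
      push_neg at hle
      have : ‖T u‖ ≤ ‖T‖ * ‖u‖ := T.le_opNorm u
      nlinarith
    linarith
  have hTx₀ : 3 * ‖T‖ < ‖T x₀‖ := by
    rw [hx₀, map_smul, norm_smul]
    have h6 : ‖(6:ℂ)‖ = 6 := by norm_num
    rw [h6]
    linarith
  set B : Set H := Metric.closedBall x₀ 1 with hB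
  have hx₀B : x₀ ∈ B := Metric.mem_closedBall_self zero_le_one
  have hBnorm : ∀ b ∈ B, 2 < ‖b‖ := by
    intro b hb
    have hd : ‖b - x₀‖ ≤ 1 := by
      rw [← dist_eq_norm]
      exact hb
    have : ‖x₀‖ ≤ ‖b‖ + ‖x₀ - b‖ := norm_le_norm_add_norm_sub' x₀ b
    rw [norm_sub_rev] at this
    linarith
  have hTB : ∀ b ∈ B, 2 * ‖T‖ ≤ ‖T b‖ := by
    intro b hb
    have hd : ‖b - x₀‖ ≤ 1 := by rw [← dist_eq_norm]; exact hb
    have h1 : ‖T b - T x₀‖ ≤ ‖T‖ := by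
      rw [← map_sub]
      calc ‖T (b - x₀)‖ ≤ ‖T‖ * ‖b - x₀‖ := T.le_opNorm _
        _ ≤ ‖T‖ * 1 := by nlinarith
        _ = ‖T‖ := mul_one _
    have h2 : ‖T x₀‖ ≤ ‖T b‖ + ‖T x₀ - T b‖ := norm_le_norm_add_norm_sub' _ _
    rw [norm_sub_rev] at h2
    linarith
  set K : Set H := closure (T '' B) with hK
  have hKcomp : IsCompact K := hT.isCompact_closure_image_of_bounded Metric.isBounded_closedBall
  have hKne : ∀ z ∈ K, z ≠ 0 := by
    intro z hz
    have hsub : K ⊆ {w : H | 2 * ‖T‖ ≤ ‖w‖} := by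
      rw [hK]
      apply closure_minimal
      · rintro _ ⟨b, hb, rfl⟩
        exact hTB b hb
      · exact isClosed_le continuous_const continuous_norm
    have := hsub hz
    intro h0
    rw [h0] at this
    simp only [norm_zero, Set.mem_setOf_eq] at this
    linarith
  -- finite subcover by polynomial preimages
  have hcover : K ⊆ ⋃ p : Polynomial ℂ, {z : H | ‖(Polynomial.aeval T p : H →L[ℂ] H) z - x₀‖ < 1} := by
    intro z hz
    have hd := as_dense H T hno z (hKne z hz)
    obtain ⟨w, hw1, hw2⟩ := hd.exists_mem_open Metric.isOpen_ball
      ⟨x₀, Metric.mem_ball_self one_pos⟩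
    obtain ⟨p, rfl⟩ := hw1
    refine Set.mem_iUnion.mpr ⟨p, ?_⟩
    simpa [dist_eq_norm] using hw2
  obtain ⟨s, hs⟩ := hKcomp.elim_finite_subcover
    (fun p : Polynomial ℂ => {z : H | ‖(Polynomial.aeval T p : H →L[ℂ] H) z - x₀‖ < 1})
    (fun p => isOpen_lt (continuous_norm.comp
      (((Polynomial.aeval T p : H →L[ℂ] H).continuous).sub continuous_const)) continuous_const)
    hcover
  set c : ℝ := 1 + ∑ p ∈ s, ‖(Polynomial.aeval T p : H →L[ℂ] H)‖ with hc
  have hsum_nonneg : 0 ≤ ∑ p ∈ s, ‖(Polynomial.aeval T p : H →L[ℂ] H)‖ :=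
    Finset.sum_nonneg fun p _ => norm_nonneg _
  have hc1 : 1 ≤ c := by rw [hc]; linarith
  have hcp : ∀ p ∈ s, ‖(Polynomial.aeval T p : H →L[ℂ] H)‖ ≤ c := by
    intro p hp
    have := Finset.single_le_sum (f := fun p => ‖(Polynomial.aeval T p : H →L[ℂ] H)‖)
      (fun q _ => norm_nonneg _) hp
    rw [hc]; linarith
  have hcomm : ∀ p : Polynomial ℂ, Commute (Polynomial.aeval T p : H →L[ℂ] H) T := by
    intro p
    show (Polynomial.aeval T p : H →L[ℂ] H) * T = T * (Polynomial.aeval T p : H →L[ℂ] H)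
    calc (Polynomial.aeval T p : H →L[ℂ] H) * T = Polynomial.aeval T (p * Polynomial.X) := by rw [map_mul, Polynomial.aeval_X]
      _ = Polynomial.aeval T (Polynomial.X * p) := by rw [mul_comm p Polynomial.X]
      _ = T * (Polynomial.aeval T p : H →L[ℂ] H) := by rw [map_mul, Polynomial.aeval_X]
  -- Hilden's iteration
  have hstep : ∀ m : ℕ, ∃ P : H →L[ℂ] H,
      ‖P‖ ≤ c ^ m ∧ Commute P T ∧ P ((T ^ m) x₀) ∈ B := by
    intro m
    induction m with
    | zero =>
      refine ⟨1, ?_, Commute.one_left T, ?_⟩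
      · rw [pow_zero]
        exact le_of_eq norm_one
      · simpa using hx₀B
    | succ m ih =>
      obtain ⟨P, hP1, hP2, hP3⟩ := ih
      have hTb : T (P ((T ^ m) x₀)) ∈ K := subset_closure ⟨_, hP3, rfl⟩
      obtain ⟨p, hps, hp⟩ := Set.mem_iUnion₂.mp (hs hTb)
      refine ⟨(Polynomial.aeval T p : H →L[ℂ] H) * P, ?_, ?_, ?_⟩
      · calc ‖(Polynomial.aeval T p : H →L[ℂ] H) * P‖ ≤ ‖(Polynomial.aeval T p : H →L[ℂ] H)‖ * ‖P‖ := norm_mul_le _ _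
          _ ≤ c * c ^ m := by
            apply mul_le_mul (hcp p hps) hP1 (norm_nonneg _)
            linarith
          _ = c ^ (m + 1) := by rw [pow_succ]; ring
      · exact (hcomm p).mul_left hP2
      · have key : ((Polynomial.aeval T p : H →L[ℂ] H) * P) ((T ^ (m+1)) x₀)
            = (Polynomial.aeval T p : H →L[ℂ] H) (T (P ((T ^ m) x₀))) := by
          rw [ContinuousLinearMap.mul_apply]
          congr 1
          have h1 : (T ^ (m+1)) x₀ = T ((T ^ m) x₀) := by
            rw [pow_succ']
            rfl
          rw [h1, ← ContinuousLinearMap.mul_apply P T, hP2.eq,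
            ContinuousLinearMap.mul_apply]
        rw [key]
        have : ‖(Polynomial.aeval T p : H →L[ℂ] H) (T (P ((T ^ m) x₀))) - x₀‖ < 1 := hp
        rw [hB, Metric.mem_closedBall, dist_eq_norm]
        linarith
  -- contradiction via Gelfand's formula
  obtain ⟨m, hm⟩ := as_gelfand H T hrad c ‖x₀‖ hc1 (norm_nonneg _)
  obtain ⟨P, hP1, _, hP3⟩ := hstep m
  have h1 : 2 < ‖P ((T ^ m) x₀)‖ := hBnorm _ hP3
  have h2 : ‖P ((T ^ m) x₀)‖ ≤ c ^ m * (‖(T ^ m : H →L[ℂ] H)‖ * ‖x₀‖) := by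
    calc ‖P ((T ^ m) x₀)‖ ≤ ‖P‖ * ‖(T ^ m) x₀‖ := P.le_opNorm _
      _ ≤ c ^ m * (‖(T ^ m : H →L[ℂ] H)‖ * ‖x₀‖) := by
        apply mul_le_mul hP1 ((T ^ m : H →L[ℂ] H).le_opNorm x₀) (norm_nonneg _)
        positivity
  linarith
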